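/- There exists a constant C > 0 such that for every positive even integer n and every integer x with 0.454·n < x ≤ 0.45537·n, one has q(x,n)/(3n−1)!! ≤ C · n⁶ · M^n, where M = sup{ h(χ,ζ,ξ) : (χ,ζ,ξ) ∈ Ω }. -/

import Mathlib

/-- The function `f(χ,ζ)` (real exponentiation, with the convention `0^0 = 1`). -/
noncomputable def ffun (χ ζ : ℝ) : ℝ :=
  ((3 : ℝ) ^ (1 / 2 - 4 * χ + 2 * ζ)
      * (1 - 2 * χ - 2 * ζ) ^ (1 - 2 * χ - 2 * ζ)
      * (1 - 2 * χ + 4 * ζ) ^ (1 - 2 * χ + 4 * ζ)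
      * (6 * χ - 3 / 2 + 3 * ζ) ^ (6 * χ - 3 / 2 + 3 * ζ)
      * (6 * χ - 3 / 2 - 9 * ζ) ^ (6 * χ - 3 / 2 - 9 * ζ)) /
    ((2 * χ + ζ - 1 / 2) ^ (2 * χ + ζ - 1 / 2)
      * (2 : ℝ) ^ (1 - 2 * χ + ζ)
      * (1 / 2 - χ - ζ) ^ (1 / 2 - χ - ζ)
      * (1 / 2 - χ + 2 * ζ) ^ (1 / 2 - χ + 2 * ζ)
      * (2 * χ - 3 * ζ - 1 / 2) ^ (2 * χ - 3 * ζ - 1 / 2))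

/-- The function `g(χ,ζ,ξ)` (real exponentiation, with the convention `0^0 = 1`). -/
noncomputable def gfun (χ ζ ξ : ℝ) : ℝ :=
  ((2 : ℝ) ^ (2 * ξ) * (1 / 1.618) ^ ξ) /
    (ξ ^ ξ
      * (1 - 2 * χ - 2 * ζ - ξ) ^ (1 - 2 * χ - 2 * ζ - ξ)
      * (1 - 2 * χ + 4 * ζ - ξ) ^ (1 - 2 * χ + 4 * ζ - ξ)
      * (10 * χ - 7 / 2 - 5 * ζ + ξ) ^ (10 * χ - 7 / 2 - 5 * ζ + ξ))

/-- The function `h(χ,ζ,ξ) = f(χ,ζ) · g(χ,ζ,ξ)`. -/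
noncomputable def hfun (χ ζ ξ : ℝ) : ℝ := ffun χ ζ * gfun χ ζ ξ

/-- The domain `Ω`. -/
def Omega : Set (ℝ × ℝ × ℝ) :=
  {p | 0.454 < p.1 ∧ p.1 ≤ 0.45537 ∧ 0 ≤ p.2.1 ∧ p.2.1 ≤ 1 / 2 - p.1 ∧
    0 ≤ p.2.2 ∧ p.2.2 ≤ 1 - 2 * p.1 - 2 * p.2.1}
/-- The quantity `q(x,n)` from Lemma 8 (all subtractions below are truncated natural
subtraction; for `0.454·n < x ≤ 0.45537·n` and indices in the given ranges every
subtraction is of a nonnegative quantity). -/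
noncomputable def qfun (x n : ℕ) : ℝ :=
  ∑ i ∈ Finset.range (n / 2 - x + 1), ∑ j ∈ Finset.range (n - 2 * x - 2 * i + 1),
    (n.choose (n / 2 - i) : ℝ) *
      (((n / 2 - i).factorial : ℝ) * (3 : ℝ) ^ (n - 2 * x - 2 * i) /
        (((2 * x + i - n / 2).factorial : ℝ) * (2 : ℝ) ^ (n / 2 - x - i) *
          ((n / 2 - x - i).factorial : ℝ))) *
      (((n / 2 + i).factorial : ℝ) * (3 : ℝ) ^ (n - 2 * x + 4 * i) /
        (((2 * x - 3 * i - n / 2).factorial : ℝ) * (2 : ℝ) ^ (n / 2 - x + 2 * i) *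
          ((n / 2 - x + 2 * i).factorial : ℝ))) *
      ((n - 2 * i - 2 * x).choose j : ℝ) * ((n - 2 * x + 4 * i).choose j : ℝ) *
      (2 : ℝ) ^ (2 * j) * (j.factorial : ℝ) * (1 / 1.618 : ℝ) ^ j *
      (((3 * (2 * x - n / 2 - 3 * i)).factorial : ℝ) *
          ((3 * (2 * x - n / 2 + i)).factorial : ℝ) /
        ((3 * (2 * x - n / 2 - 3 * i) - 2 * (n - 2 * i - 2 * x) + j).factorial : ℝ))

/-- The supremum `M = sup { h(χ,ζ,ξ) : (χ,ζ,ξ) ∈ Ω }`. -/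
noncomputable def Msup : ℝ := sSup {y : ℝ | ∃ p ∈ Omega, hfun p.1 p.2.1 p.2.2 = y}



set_option maxHeartbeats 2000000

open Real

/-- `st k = k^k / e^k`, the Stirling approximation kernel (with `0^0 = 1`). -/
noncomputable def st (k : ℕ) : ℝ := (k : ℝ) ^ k / Real.exp k

lemma st_pos (k : ℕ) : 0 < st k := by
  cases k with
  | zero => simp [st]
  | succ n => unfold st; positivity

lemma succ_pow_le (k : ℕ) : ((k : ℝ) + 1) ^ k ≤ Real.exp 1 * (k : ℝ) ^ k := by
  cases k with
  | zero => simpa using Real.one_le_exp (by norm_num)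
  | succ n =>
      set m : ℕ := n + 1 with hmdef
      have hm : (0 : ℝ) < m := by positivity
      have h1 : ((m : ℝ) + 1) = (m : ℝ) * (1 + 1 / m) := by field_simp
      have h2 : (1 + 1 / (m : ℝ)) ^ m ≤ Real.exp 1 := by
        have := Real.add_one_le_exp (1 / (m : ℝ))
        calc (1 + 1 / (m : ℝ)) ^ m ≤ (Real.exp (1 / m)) ^ m := by
              apply pow_le_pow_left₀ (by positivity) (by linarith) _
          _ = Real.exp 1 := by
              rw [← Real.exp_nat_mul]
              congr 1
              field_simp
      calc ((m : ℝ) + 1) ^ m = (m : ℝ) ^ m * (1 + 1 / m) ^ m := by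
            rw [h1, mul_pow]
        _ ≤ (m : ℝ) ^ m * Real.exp 1 := by
            apply mul_le_mul_of_nonneg_left h2 (by positivity)
        _ = Real.exp 1 * (m : ℝ) ^ m := by ring

lemma st_le_factorial (k : ℕ) : st k ≤ (k.factorial : ℝ) := by
  induction k with
  | zero => simp [st]
  | succ n ih =>
      have h1 : st (n + 1) ≤ ((n : ℝ) + 1) * st n := by
        unfold st
        push_cast
        rw [div_le_iff₀ (by positivity), pow_succ]
        have he : Real.exp ((n : ℝ) + 1) = Real.exp n * Real.exp 1 := by
          rw [← Real.exp_add]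
        rw [he]
        calc ((n:ℝ)+1)^n * ((n:ℝ)+1) ≤ (Real.exp 1 * (n:ℝ)^n) * ((n:ℝ)+1) := by
              apply mul_le_mul_of_nonneg_right (succ_pow_le n) (by positivity)
          _ = ((n:ℝ)+1) * ((n:ℝ)^n / Real.exp n) * (Real.exp n * Real.exp 1) := by
              field_simp
      calc st (n + 1) ≤ ((n : ℝ) + 1) * st n := h1
        _ ≤ ((n : ℝ) + 1) * (n.factorial : ℝ) := by
            apply mul_le_mul_of_nonneg_left ih (by positivity)
        _ = ((n + 1).factorial : ℝ) := by
            rw [Nat.factorial_succ]; push_cast; ring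

lemma factorial_le_st (k : ℕ) : (k.factorial : ℝ) ≤ Real.exp 1 * Real.sqrt (k + 1) * st k := by
  cases k with
  | zero =>
      simp only [Nat.factorial_zero, Nat.cast_one, Nat.cast_zero, st, zero_add, Real.sqrt_one]
      norm_num
  | succ n =>
      have hs : Stirling.stirlingSeq (n + 1) ≤ Real.exp 1 / Real.sqrt 2 := by
        rw [← Stirling.stirlingSeq_one]
        have := Stirling.stirlingSeq'_antitone (Nat.zero_le n)
        simpa [Function.comp] using this
      have hdef : (↑(n+1).factorial : ℝ)
          = Stirling.stirlingSeq (n+1) * (Real.sqrt (2 * (n+1)) * ((n+1) / Real.exp 1) ^ (n+1)) := by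
        rw [Stirling.stirlingSeq]
        have hpos : (0:ℝ) < Real.sqrt (2 * (n+1)) * (((n:ℝ)+1) / Real.exp 1) ^ (n+1) := by
          positivity
        field_simp
        push_cast; rfl
      have hst : (((n:ℝ)+1) / Real.exp 1) ^ (n+1) = st (n+1) := by
        rw [st, div_pow, ← Real.exp_nat_mul]
        push_cast
        norm_num
      rw [hdef]
      push_cast
      have h2 : Real.sqrt (2 * ((n:ℝ)+1)) = Real.sqrt 2 * Real.sqrt ((n:ℝ)+1) := by
        rw [← Real.sqrt_mul (by norm_num)]
      have hsqpos : (0:ℝ) < Real.sqrt (2*((n:ℝ)+1)) * (((n:ℝ)+1) / Real.exp 1) ^ (n+1) := by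
        positivity
      calc Stirling.stirlingSeq (n+1) * (Real.sqrt (2 * ((n:ℝ)+1)) * (((n:ℝ)+1) / Real.exp 1) ^ (n+1))
          ≤ (Real.exp 1 / Real.sqrt 2) * (Real.sqrt (2 * ((n:ℝ)+1)) * (((n:ℝ)+1) / Real.exp 1) ^ (n+1)) := by
            apply mul_le_mul_of_nonneg_right hs
            positivity
        _ = Real.exp 1 * Real.sqrt ((n:ℝ)+1) * st (n+1) := by
            rw [← hst, h2]
            have hs2 : Real.sqrt 2 ≠ 0 := by positivity
            field_simp
        _ ≤ Real.exp 1 * Real.sqrt (((n:ℝ)+1) + 1) * st (n+1) := by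
            apply mul_le_mul_of_nonneg_right _ (st_pos _).le
            apply mul_le_mul_of_nonneg_left _ (Real.exp_pos 1).le
            apply Real.sqrt_le_sqrt
            linarith

lemma natpow_eq_exp (c : ℝ) (hc : 0 < c) (k : ℕ) :
    c ^ k = Real.exp ((k : ℝ) * Real.log c) := by
  rw [← Real.rpow_natCast c k, Real.rpow_def_of_pos hc, mul_comm]

lemma st_eq_exp (k : ℕ) : st k = Real.exp ((k : ℝ) * Real.log k - k) := by
  cases k with
  | zero => simp [st]
  | succ n =>
      rw [st, natpow_eq_exp _ (by positivity), ← Real.exp_sub]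

lemma rpow_self_pow (nn : ℕ) (hnn : 0 < nn) (k : ℕ) :
    (((k : ℝ) / (nn : ℝ)) ^ ((k : ℝ) / (nn : ℝ))) ^ nn
      = Real.exp ((k : ℝ) * Real.log ((k : ℝ) / (nn : ℝ))) := by
  cases k with
  | zero => simp
  | succ p =>
      have ht : (0 : ℝ) < ((p + 1 : ℕ) : ℝ) / (nn : ℝ) := by
        have : (0:ℝ) < (nn:ℝ) := by exact_mod_cast hnn
        positivity
      rw [← Real.rpow_natCast ((((p+1 : ℕ) : ℝ) / (nn : ℝ)) ^ (((p+1 : ℕ) : ℝ) / (nn : ℝ))) nn,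
        ← Real.rpow_mul ht.le, Real.rpow_def_of_pos ht]
      congr 1
      have hnn' : ((nn : ℝ)) ≠ 0 := by positivity
      field_simp

lemma const_rpow_pow (c : ℝ) (hc : 0 < c) (E : ℝ) (nn : ℕ) :
    (c ^ E) ^ nn = Real.exp (((nn : ℝ) * E) * Real.log c) := by
  rw [← Real.rpow_natCast (c ^ E) nn, ← Real.rpow_mul hc.le, Real.rpow_def_of_pos hc]
  congr 1
  ring

lemma cast_mul_log_div (nn : ℕ) (hnn : 0 < nn) (k : ℕ) :
    (k : ℝ) * Real.log ((k : ℝ) / (nn : ℝ)) = k * Real.log k - k * Real.log nn := by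
  cases k with
  | zero => simp
  | succ p =>
      have h1 : ((p + 1 : ℕ) : ℝ) ≠ 0 := by positivity
      have h2 : ((nn : ℝ)) ≠ 0 := by
        have : (0:ℝ) < (nn:ℝ) := by exact_mod_cast hnn
        positivity
      rw [Real.log_div h1 h2]
      ring

lemma core (u s i j : ℕ) (hm : 0 < 2*u+s+5*i) (hD : 4*u ≤ 3*s) (hj : j ≤ 2*u) :
    st (2*(2*u+s+5*i)) * st (2*u) * st (2*u+6*i) * st (3*s) * st (3*(s+4*i))
        * st (3*(2*u+s+5*i))
        * (3:ℝ)^(4*u+6*i) * (2:ℝ)^(2*j+4*u+3*s+12*i) * ((1:ℝ)/1.618)^j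
    = hfun (((u+s+4*i : ℕ) : ℝ) / ((4*u+2*s+10*i : ℕ) : ℝ))
          (((i : ℕ) : ℝ) / ((4*u+2*s+10*i : ℕ) : ℝ))
          (((j : ℕ) : ℝ) / ((4*u+2*s+10*i : ℕ) : ℝ)) ^ (4*u+2*s+10*i)
        * (st (s+4*i) * st u * st s * st (u+3*i) * st j * st (2*u-j) * st (2*u+6*i-j)
            * st (3*s-4*u+j) * st (6*(2*u+s+5*i))) := by
  have hnn : 0 < 4*u+2*s+10*i := by omega
  have hnnR : (0:ℝ) < ((4*u+2*s+10*i : ℕ) : ℝ) := by exact_mod_cast hnn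
  have hnnR' : ((4*u+2*s+10*i : ℕ) : ℝ) ≠ 0 := ne_of_gt hnnR
  have hNR : ((4*u+2*s+10*i : ℕ) : ℝ) = 4*(u:ℝ)+2*(s:ℝ)+10*(i:ℝ) := by push_cast; ring
  have hNR0 : 4*(u:ℝ)+2*(s:ℝ)+10*(i:ℝ) ≠ 0 := by rw [← hNR]; exact hnnR'
  have hNR0' : (u:ℝ)*4+2*s+i*10 ≠ 0 := by contrapose! hNR0; linarith
  set χ : ℝ := ((u+s+4*i : ℕ) : ℝ) / ((4*u+2*s+10*i : ℕ) : ℝ) with hχ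
  set ζ : ℝ := ((i : ℕ) : ℝ) / ((4*u+2*s+10*i : ℕ) : ℝ) with hζ
  set ξ : ℝ := ((j : ℕ) : ℝ) / ((4*u+2*s+10*i : ℕ) : ℝ) with hξ
  have B9 : 1 - 2 * χ - 2 * ζ - ξ = ((2*u-j : ℕ) : ℝ) / ((4*u+2*s+10*i : ℕ) : ℝ) := by
    rw [hχ, hζ, hξ, Nat.cast_sub hj, hNR]; push_cast; field_simp; try ring
  have B10 : 1 - 2 * χ + 4 * ζ - ξ = ((2*u+6*i-j : ℕ) : ℝ) / ((4*u+2*s+10*i : ℕ) : ℝ) := by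
    rw [hχ, hζ, hξ, Nat.cast_sub (by omega : j ≤ 2*u+6*i), hNR]; push_cast; field_simp; try ring
  have B11 : 10 * χ - 7 / 2 - 5 * ζ + ξ = ((3*s-4*u+j : ℕ) : ℝ) / ((4*u+2*s+10*i : ℕ) : ℝ) := by
    have hc : ((3*s-4*u+j : ℕ) : ℝ) = 3*(s:ℝ) - 4*(u:ℝ) + (j:ℝ) := by
      push_cast [Nat.cast_sub hD]; ring
    rw [hχ, hζ, hξ, hc, hNR]; push_cast; grind
  have B1 : 1 - 2 * χ - 2 * ζ = ((2*u : ℕ) : ℝ) / ((4*u+2*s+10*i : ℕ) : ℝ) := by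
    rw [hχ, hζ, hNR]; push_cast; field_simp; try ring
  have B2 : 1 - 2 * χ + 4 * ζ = ((2*u+6*i : ℕ) : ℝ) / ((4*u+2*s+10*i : ℕ) : ℝ) := by
    rw [hχ, hζ, hNR]; push_cast; field_simp; try ring
  have B3 : 6 * χ - 3 / 2 + 3 * ζ = ((3*(s+4*i) : ℕ) : ℝ) / ((4*u+2*s+10*i : ℕ) : ℝ) := by
    rw [hχ, hζ, hNR]; push_cast; grind
  have B4 : 6 * χ - 3 / 2 - 9 * ζ = ((3*s : ℕ) : ℝ) / ((4*u+2*s+10*i : ℕ) : ℝ) := by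
    rw [hχ, hζ, hNR]; push_cast; grind
  have B5 : 2 * χ + ζ - 1 / 2 = ((s+4*i : ℕ) : ℝ) / ((4*u+2*s+10*i : ℕ) : ℝ) := by
    rw [hχ, hζ, hNR]; push_cast; field_simp; try ring
  have B6 : 1 / 2 - χ - ζ = ((u : ℕ) : ℝ) / ((4*u+2*s+10*i : ℕ) : ℝ) := by
    rw [hχ, hζ, hNR]; push_cast; field_simp; try ring
  have B7 : 1 / 2 - χ + 2 * ζ = ((u+3*i : ℕ) : ℝ) / ((4*u+2*s+10*i : ℕ) : ℝ) := by
    rw [hχ, hζ, hNR]; push_cast; field_simp; try ring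
  have B8 : 2 * χ - 3 * ζ - 1 / 2 = ((s : ℕ) : ℝ) / ((4*u+2*s+10*i : ℕ) : ℝ) := by
    rw [hχ, hζ, hNR]; push_cast; field_simp; try ring
  have E3 : ((4*u+2*s+10*i : ℕ) : ℝ) * (1 / 2 - 4 * χ + 2 * ζ)
      = -2*(u:ℝ) - 3*(s:ℝ) - 9*(i:ℝ) := by
    rw [hχ, hζ, hNR]; push_cast; field_simp; try ring
  have E2 : ((4*u+2*s+10*i : ℕ) : ℝ) * (1 - 2 * χ + ζ) = 2*(u:ℝ) + 3*(i:ℝ) := by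
    rw [hχ, hζ, hNR]; push_cast; field_simp; try ring
  have E2b : ((4*u+2*s+10*i : ℕ) : ℝ) * (2 * ξ) = 2*(j:ℝ) := by
    rw [hξ, hNR]; push_cast; field_simp; try ring
  have Ephi : ((4*u+2*s+10*i : ℕ) : ℝ) * ξ = (j:ℝ) := by
    rw [hξ, hNR]
    field_simp
  rw [natpow_eq_exp 3 (by norm_num), natpow_eq_exp 2 (by norm_num),
    natpow_eq_exp (1/1.618) (by norm_num)]
  simp only [st_eq_exp]
  unfold hfun ffun gfun
  rw [B9, B10, B11, B1, B2, B3, B4, B5, B6, B7, B8, hξ]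
  simp only [mul_pow, div_pow]
  rw [rpow_self_pow _ hnn (2*u), rpow_self_pow _ hnn (2*u+6*i), rpow_self_pow _ hnn (3*(s+4*i)),
    rpow_self_pow _ hnn (3*s), rpow_self_pow _ hnn (s+4*i), rpow_self_pow _ hnn u,
    rpow_self_pow _ hnn (u+3*i), rpow_self_pow _ hnn s, rpow_self_pow _ hnn j,
    rpow_self_pow _ hnn (2*u-j), rpow_self_pow _ hnn (2*u+6*i-j),
    rpow_self_pow _ hnn (3*s-4*u+j)]
  rw [const_rpow_pow 3 (by norm_num) _ _, const_rpow_pow 2 (by norm_num) _ _,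
    const_rpow_pow 2 (by norm_num) _ _, const_rpow_pow (1/1.618) (by norm_num) _ _]
  rw [E3, E2, E2b, Ephi]
  simp only [← Real.exp_add, ← Real.exp_sub]
  rw [Real.exp_eq_exp]
  simp only [cast_mul_log_div _ hnn]
  have hMr : (0:ℝ) < 2*(u:ℝ)+(s:ℝ)+5*(i:ℝ) := by exact_mod_cast hm
  have hMr' : (2*(u:ℝ)+(s:ℝ)+5*(i:ℝ)) ≠ 0 := ne_of_gt hMr
  have h2m : Real.log ((4*u+2*s+10*i : ℕ) : ℝ)
      = Real.log 2 + Real.log (2*(u:ℝ)+(s:ℝ)+5*(i:ℝ)) := by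
    rw [hNR, show 4*(u:ℝ)+2*(s:ℝ)+10*(i:ℝ) = 2*(2*(u:ℝ)+(s:ℝ)+5*(i:ℝ)) by ring,
      Real.log_mul (by norm_num) hMr']
  have h2mm : Real.log ((2*(2*u+s+5*i) : ℕ) : ℝ)
      = Real.log 2 + Real.log (2*(u:ℝ)+(s:ℝ)+5*(i:ℝ)) := by
    rw [show ((2*(2*u+s+5*i) : ℕ) : ℝ) = 2*(2*(u:ℝ)+(s:ℝ)+5*(i:ℝ)) by push_cast; ring,
      Real.log_mul (by norm_num) hMr']
  have h3m : Real.log ((3*(2*u+s+5*i) : ℕ) : ℝ)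
      = Real.log 3 + Real.log (2*(u:ℝ)+(s:ℝ)+5*(i:ℝ)) := by
    rw [show ((3*(2*u+s+5*i) : ℕ) : ℝ) = 3*(2*(u:ℝ)+(s:ℝ)+5*(i:ℝ)) by push_cast; ring,
      Real.log_mul (by norm_num) hMr']
  have h6m : Real.log ((6*(2*u+s+5*i) : ℕ) : ℝ)
      = Real.log 2 + (Real.log 3 + Real.log (2*(u:ℝ)+(s:ℝ)+5*(i:ℝ))) := by
    rw [show ((6*(2*u+s+5*i) : ℕ) : ℝ) = 2*(3*(2*(u:ℝ)+(s:ℝ)+5*(i:ℝ))) by push_cast; ring,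
      Real.log_mul (by norm_num) (by positivity), Real.log_mul (by norm_num) hMr']
  rw [h2m, h2mm, h3m, h6m]
  push_cast [Nat.cast_sub hj, Nat.cast_sub hD, Nat.cast_sub (by omega : j ≤ 2*u+6*i)]
  ring

lemma master (K : ℝ) (hK : 0 ≤ K) (k1 k2 k3 k4 k5 k6 l1 l2 l3 l4 l5 l6 l7 l8 l9 : ℕ)
    (pw H : ℝ) (hpw : 0 ≤ pw) (hH : 0 ≤ H)
    (h1 : Real.exp 1 * Real.sqrt (k1 + 1) ≤ K) (h2 : Real.exp 1 * Real.sqrt (k2 + 1) ≤ K)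
    (h3 : Real.exp 1 * Real.sqrt (k3 + 1) ≤ K) (h4 : Real.exp 1 * Real.sqrt (k4 + 1) ≤ K)
    (h5 : Real.exp 1 * Real.sqrt (k5 + 1) ≤ K) (h6 : Real.exp 1 * Real.sqrt (k6 + 1) ≤ K)
    (hcore : st k1 * st k2 * st k3 * st k4 * st k5 * st k6 * pw
      = H * (st l1 * st l2 * st l3 * st l4 * st l5 * st l6 * st l7 * st l8 * st l9)) :
    (k1.factorial : ℝ) * k2.factorial * k3.factorial * k4.factorial * k5.factorial
        * k6.factorial * pw
      ≤ K ^ 6 * H * ((l1.factorial : ℝ) * l2.factorial * l3.factorial * l4.factorial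
        * l5.factorial * l6.factorial * l7.factorial * l8.factorial * l9.factorial) := by
  have e1 := factorial_le_st k1
  have e2 := factorial_le_st k2
  have e3 := factorial_le_st k3
  have e4 := factorial_le_st k4
  have e5 := factorial_le_st k5
  have e6 := factorial_le_st k6
  have sp : ∀ k : ℕ, (0:ℝ) < st k := st_pos
  have fp : ∀ k : ℕ, (0:ℝ) ≤ (k.factorial : ℝ) := fun k => by positivity
  calc (k1.factorial : ℝ) * k2.factorial * k3.factorial * k4.factorial * k5.factorial
        * k6.factorial * pw
      ≤ (Real.exp 1 * Real.sqrt (k1+1) * st k1) * (Real.exp 1 * Real.sqrt (k2+1) * st k2)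
        * (Real.exp 1 * Real.sqrt (k3+1) * st k3) * (Real.exp 1 * Real.sqrt (k4+1) * st k4)
        * (Real.exp 1 * Real.sqrt (k5+1) * st k5) * (Real.exp 1 * Real.sqrt (k6+1) * st k6)
        * pw := by
        have b1 : (0:ℝ) ≤ Real.exp 1 * Real.sqrt (k1+1) * st k1 := mul_nonneg (by positivity) (st_pos k1).le
        have b2 : (0:ℝ) ≤ Real.exp 1 * Real.sqrt (k2+1) * st k2 := mul_nonneg (by positivity) (st_pos k2).le
        have b3 : (0:ℝ) ≤ Real.exp 1 * Real.sqrt (k3+1) * st k3 := mul_nonneg (by positivity) (st_pos k3).le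
        have b4 : (0:ℝ) ≤ Real.exp 1 * Real.sqrt (k4+1) * st k4 := mul_nonneg (by positivity) (st_pos k4).le
        have b5 : (0:ℝ) ≤ Real.exp 1 * Real.sqrt (k5+1) * st k5 := mul_nonneg (by positivity) (st_pos k5).le
        gcongr <;> first | exact fp _ | assumption
    _ = (Real.exp 1 * Real.sqrt (k1+1)) * (Real.exp 1 * Real.sqrt (k2+1))
        * (Real.exp 1 * Real.sqrt (k3+1)) * (Real.exp 1 * Real.sqrt (k4+1))
        * (Real.exp 1 * Real.sqrt (k5+1)) * (Real.exp 1 * Real.sqrt (k6+1))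
        * (st k1 * st k2 * st k3 * st k4 * st k5 * st k6 * pw) := by ring
    _ ≤ K * K * K * K * K * K * (st k1 * st k2 * st k3 * st k4 * st k5 * st k6 * pw) := by
        have hst : (0:ℝ) ≤ st k1 * st k2 * st k3 * st k4 * st k5 * st k6 * pw := by
          have c1 := (sp k1).le; have c2 := (sp k2).le; have c3 := (sp k3).le
          have c4 := (sp k4).le; have c5 := (sp k5).le; have c6 := (sp k6).le
          exact mul_nonneg (mul_nonneg (mul_nonneg (mul_nonneg (mul_nonneg (mul_nonneg c1 c2) c3) c4) c5) c6) hpw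
        have hb : ∀ a : ℕ, (0:ℝ) ≤ Real.exp 1 * Real.sqrt (a+1) := fun a => by positivity
        gcongr <;> first | exact hb _ | assumption
    _ = K ^ 6 * (st k1 * st k2 * st k3 * st k4 * st k5 * st k6 * pw) := by ring
    _ = K ^ 6 * (H * (st l1 * st l2 * st l3 * st l4 * st l5 * st l6 * st l7 * st l8 * st l9)) := by
        rw [hcore]
    _ ≤ K ^ 6 * (H * ((l1.factorial : ℝ) * l2.factorial * l3.factorial * l4.factorial
        * l5.factorial * l6.factorial * l7.factorial * l8.factorial * l9.factorial)) := by
        have s1 := st_le_factorial l1; have s2 := st_le_factorial l2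
        have s3 := st_le_factorial l3; have s4 := st_le_factorial l4
        have s5 := st_le_factorial l5; have s6 := st_le_factorial l6
        have s7 := st_le_factorial l7; have s8 := st_le_factorial l8
        have s9 := st_le_factorial l9
        gcongr <;> first | exact (sp _).le | assumption
    _ = K ^ 6 * H * ((l1.factorial : ℝ) * l2.factorial * l3.factorial * l4.factorial
        * l5.factorial * l6.factorial * l7.factorial * l8.factorial * l9.factorial) := by ring

lemma rpow_self_pos {t : ℝ} (ht : 0 ≤ t) : 0 < t ^ t := by
  rcases eq_or_lt_of_le ht with h | h
  · rw [← h, Real.rpow_zero]; norm_num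
  · exact Real.rpow_pos_of_pos h _

lemma rpow_self_ge {t : ℝ} (ht : 0 ≤ t) : Real.exp (-1) ≤ t ^ t := by
  rcases eq_or_lt_of_le ht with h | h
  · rw [← h, Real.rpow_zero]
    calc Real.exp (-1) ≤ Real.exp 0 := Real.exp_le_exp.mpr (by norm_num)
      _ = 1 := Real.exp_zero
  · rw [Real.rpow_def_of_pos h]
    apply Real.exp_le_exp.mpr
    have hlog : Real.log t⁻¹ ≤ t⁻¹ - 1 := Real.log_le_sub_one_of_pos (by positivity)
    rw [Real.log_inv] at hlog
    have : 1 - t⁻¹ ≤ Real.log t := by linarith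
    have h2 : t * (1 - t⁻¹) ≤ t * Real.log t := by nlinarith
    have h3 : t * (1 - t⁻¹) = t - 1 := by field_simp
    nlinarith [Real.log_le_sub_one_of_pos h]

lemma rpow_self_le {t : ℝ} (ht : 0 ≤ t) (ht4 : t ≤ 4) : t ^ t ≤ Real.exp 16 := by
  rcases eq_or_lt_of_le ht with h | h
  · rw [← h, Real.rpow_zero]
    exact Real.one_le_exp (by norm_num)
  · rw [Real.rpow_def_of_pos h]
    apply Real.exp_le_exp.mpr
    have hlog : Real.log t ≤ t - 1 := Real.log_le_sub_one_of_pos h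
    nlinarith


lemma prod5_le {a1 a2 a3 a4 a5 b1 b2 b3 b4 b5 : ℝ}
    (n1 : 0 ≤ a1) (n2 : 0 ≤ a2) (n3 : 0 ≤ a3) (n4 : 0 ≤ a4) (n5 : 0 ≤ a5)
    (m1 : 0 ≤ b1) (m2 : 0 ≤ b2) (m3 : 0 ≤ b3) (m4 : 0 ≤ b4)
    (h1 : a1 ≤ b1) (h2 : a2 ≤ b2) (h3 : a3 ≤ b3) (h4 : a4 ≤ b4) (h5 : a5 ≤ b5) :
    a1*a2*a3*a4*a5 ≤ b1*b2*b3*b4*b5 := by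
  have q2 : a1*a2 ≤ b1*b2 := mul_le_mul h1 h2 n2 m1
  have q3 : a1*a2*a3 ≤ b1*b2*b3 := mul_le_mul q2 h3 n3 (mul_nonneg m1 m2)
  have q4 : a1*a2*a3*a4 ≤ b1*b2*b3*b4 :=
    mul_le_mul q3 h4 n4 (mul_nonneg (mul_nonneg m1 m2) m3)
  exact mul_le_mul q4 h5 n5 (mul_nonneg (mul_nonneg (mul_nonneg m1 m2) m3) m4)

lemma hfun_bounds {χ ζ ξ : ℝ} (h1 : 0.454 < χ) (h2 : χ ≤ 0.45537) (h3 : 0 ≤ ζ)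
    (h4 : ζ ≤ 1 / 2 - χ) (h5 : 0 ≤ ξ) (h6 : ξ ≤ 1 - 2 * χ - 2 * ζ) :
    0 ≤ hfun χ ζ ξ ∧ hfun χ ζ ξ ≤ Real.exp 110 := by
  have n1a : (0:ℝ) ≤ 1 - 2 * χ - 2 * ζ := by linarith
  have n1b : 1 - 2 * χ - 2 * ζ ≤ 4 := by linarith
  have n2a : (0:ℝ) ≤ 1 - 2 * χ + 4 * ζ := by linarith
  have n2b : 1 - 2 * χ + 4 * ζ ≤ 4 := by linarith
  have n3a : (0:ℝ) ≤ 6 * χ - 3 / 2 + 3 * ζ := by linarith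
  have n3b : 6 * χ - 3 / 2 + 3 * ζ ≤ 4 := by linarith
  have n4a : (0:ℝ) ≤ 6 * χ - 3 / 2 - 9 * ζ := by linarith
  have n4b : 6 * χ - 3 / 2 - 9 * ζ ≤ 4 := by linarith
  have d1a : (0:ℝ) ≤ 2 * χ + ζ - 1 / 2 := by linarith
  have d2a : (0:ℝ) ≤ 1 / 2 - χ - ζ := by linarith
  have d3a : (0:ℝ) ≤ 1 / 2 - χ + 2 * ζ := by linarith
  have d4a : (0:ℝ) ≤ 2 * χ - 3 * ζ - 1 / 2 := by linarith
  have g1a : (0:ℝ) ≤ 1 - 2 * χ - 2 * ζ - ξ := by linarith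
  have g2a : (0:ℝ) ≤ 1 - 2 * χ + 4 * ζ - ξ := by linarith
  have g3a : (0:ℝ) ≤ 10 * χ - 7 / 2 - 5 * ζ + ξ := by linarith
  -- numerator bound for ffun
  have e3 : (3:ℝ) ^ (1 / 2 - 4 * χ + 2 * ζ) ≤ Real.exp 16 := by
    calc (3:ℝ) ^ (1 / 2 - 4 * χ + 2 * ζ) ≤ (3:ℝ) ^ (2:ℝ) := by
          apply Real.rpow_le_rpow_of_exponent_le (by norm_num)
          linarith
      _ = 9 := by
          rw [show (2:ℝ) = ((2:ℕ):ℝ) by norm_num, Real.rpow_natCast]; norm_num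
      _ ≤ Real.exp 16 := by
          have : (16:ℝ) = 16 * 1 := by norm_num
          nlinarith [Real.add_one_le_exp (16:ℝ), Real.exp_pos (16:ℝ)]
  have e3pos : (0:ℝ) ≤ (3:ℝ) ^ (1 / 2 - 4 * χ + 2 * ζ) := (Real.rpow_pos_of_pos (by norm_num) _).le
  have e2ge : (1:ℝ) ≤ (2:ℝ) ^ (1 - 2 * χ + ζ) := by
    rw [show (1:ℝ) = (2:ℝ) ^ (0:ℝ) by rw [Real.rpow_zero]]
    apply Real.rpow_le_rpow_of_exponent_le (by norm_num)
    linarith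
  have e2pos : (0:ℝ) < (2:ℝ) ^ (1 - 2 * χ + ζ) := Real.rpow_pos_of_pos (by norm_num) _
  have g2le : (2:ℝ) ^ (2 * ξ) ≤ Real.exp 16 := by
    calc (2:ℝ) ^ (2 * ξ) ≤ (2:ℝ) ^ (2:ℝ) := by
          apply Real.rpow_le_rpow_of_exponent_le (by norm_num)
          linarith
      _ = 4 := by rw [show (2:ℝ) = ((2:ℕ):ℝ) by norm_num, Real.rpow_natCast]; norm_num
      _ ≤ Real.exp 16 := by nlinarith [Real.add_one_le_exp (16:ℝ)]
  have g2pos : (0:ℝ) ≤ (2:ℝ) ^ (2 * ξ) := (Real.rpow_pos_of_pos (by norm_num) _).le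
  have gphile : ((1:ℝ)/1.618) ^ ξ ≤ 1 := by
    apply Real.rpow_le_one (by norm_num) (by norm_num) h5
  have gphipos : (0:ℝ) ≤ ((1:ℝ)/1.618) ^ ξ := (Real.rpow_pos_of_pos (by norm_num) _).le
  -- positivity of denominators
  have fden : (0:ℝ) < (2 * χ + ζ - 1 / 2) ^ (2 * χ + ζ - 1 / 2)
      * (2 : ℝ) ^ (1 - 2 * χ + ζ)
      * (1 / 2 - χ - ζ) ^ (1 / 2 - χ - ζ)
      * (1 / 2 - χ + 2 * ζ) ^ (1 / 2 - χ + 2 * ζ)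
      * (2 * χ - 3 * ζ - 1 / 2) ^ (2 * χ - 3 * ζ - 1 / 2) := by
    have := rpow_self_pos d1a; have := rpow_self_pos d2a
    have := rpow_self_pos d3a; have := rpow_self_pos d4a
    positivity
  have gden : (0:ℝ) < ξ ^ ξ
      * (1 - 2 * χ - 2 * ζ - ξ) ^ (1 - 2 * χ - 2 * ζ - ξ)
      * (1 - 2 * χ + 4 * ζ - ξ) ^ (1 - 2 * χ + 4 * ζ - ξ)
      * (10 * χ - 7 / 2 - 5 * ζ + ξ) ^ (10 * χ - 7 / 2 - 5 * ζ + ξ) := by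
    have := rpow_self_pos h5; have := rpow_self_pos g1a
    have := rpow_self_pos g2a; have := rpow_self_pos g3a
    positivity
  have fnum_nonneg : (0:ℝ) ≤ (3 : ℝ) ^ (1 / 2 - 4 * χ + 2 * ζ)
      * (1 - 2 * χ - 2 * ζ) ^ (1 - 2 * χ - 2 * ζ)
      * (1 - 2 * χ + 4 * ζ) ^ (1 - 2 * χ + 4 * ζ)
      * (6 * χ - 3 / 2 + 3 * ζ) ^ (6 * χ - 3 / 2 + 3 * ζ)
      * (6 * χ - 3 / 2 - 9 * ζ) ^ (6 * χ - 3 / 2 - 9 * ζ) := by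
    have := rpow_self_pos n1a; have := rpow_self_pos n2a
    have := rpow_self_pos n3a; have := rpow_self_pos n4a
    positivity
  have gnum_nonneg : (0:ℝ) ≤ (2 : ℝ) ^ (2 * ξ) * ((1:ℝ) / 1.618) ^ ξ := by positivity
  have hf_nonneg : 0 ≤ ffun χ ζ := div_nonneg fnum_nonneg fden.le
  have hg_nonneg : 0 ≤ gfun χ ζ ξ := div_nonneg gnum_nonneg gden.le
  constructor
  · exact mul_nonneg hf_nonneg hg_nonneg
  · -- upper bounds
    have fnum_le : (3 : ℝ) ^ (1 / 2 - 4 * χ + 2 * ζ)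
        * (1 - 2 * χ - 2 * ζ) ^ (1 - 2 * χ - 2 * ζ)
        * (1 - 2 * χ + 4 * ζ) ^ (1 - 2 * χ + 4 * ζ)
        * (6 * χ - 3 / 2 + 3 * ζ) ^ (6 * χ - 3 / 2 + 3 * ζ)
        * (6 * χ - 3 / 2 - 9 * ζ) ^ (6 * χ - 3 / 2 - 9 * ζ) ≤ Real.exp 16 ^ 5 := by
      have c1 := rpow_self_le n1a n1b
      have c2 := rpow_self_le n2a n2b
      have c3 := rpow_self_le n3a n3b
      have c4 := rpow_self_le n4a n4b
      have p1 := (rpow_self_pos n1a).le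
      have p2 := (rpow_self_pos n2a).le
      have p3 := (rpow_self_pos n3a).le
      have p4 := (rpow_self_pos n4a).le
      have hep : (0:ℝ) ≤ Real.exp 16 := (Real.exp_pos _).le
      calc (3 : ℝ) ^ (1 / 2 - 4 * χ + 2 * ζ)
          * (1 - 2 * χ - 2 * ζ) ^ (1 - 2 * χ - 2 * ζ)
          * (1 - 2 * χ + 4 * ζ) ^ (1 - 2 * χ + 4 * ζ)
          * (6 * χ - 3 / 2 + 3 * ζ) ^ (6 * χ - 3 / 2 + 3 * ζ)
          * (6 * χ - 3 / 2 - 9 * ζ) ^ (6 * χ - 3 / 2 - 9 * ζ)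
          ≤ Real.exp 16 * Real.exp 16 * Real.exp 16 * Real.exp 16 * Real.exp 16 := by
            gcongr <;> assumption
        _ = Real.exp 16 ^ 5 := by ring
    have fden_ge : Real.exp (-1) ^ 4 * 1 ≤ (2 * χ + ζ - 1 / 2) ^ (2 * χ + ζ - 1 / 2)
        * (2 : ℝ) ^ (1 - 2 * χ + ζ)
        * (1 / 2 - χ - ζ) ^ (1 / 2 - χ - ζ)
        * (1 / 2 - χ + 2 * ζ) ^ (1 / 2 - χ + 2 * ζ)
        * (2 * χ - 3 * ζ - 1 / 2) ^ (2 * χ - 3 * ζ - 1 / 2) := by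
      have c1 := rpow_self_ge d1a
      have c2 := rpow_self_ge d2a
      have c3 := rpow_self_ge d3a
      have c4 := rpow_self_ge d4a
      have hen : (0:ℝ) ≤ Real.exp (-1) := (Real.exp_pos _).le
      have hcalc : Real.exp (-1) ^ 4 * 1
          = Real.exp (-1) * 1 * Real.exp (-1) * Real.exp (-1) * Real.exp (-1) := by ring
      rw [hcalc]
      exact prod5_le hen (by norm_num) hen hen hen (rpow_self_pos d1a).le e2pos.le
        (rpow_self_pos d2a).le (rpow_self_pos d3a).le c1 e2ge c2 c3 c4
    have gnum_le : (2 : ℝ) ^ (2 * ξ) * ((1:ℝ) / 1.618) ^ ξ ≤ Real.exp 16 * 1 :=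
      mul_le_mul g2le gphile gphipos (Real.exp_pos _).le
    have gden_ge : Real.exp (-1) ^ 4 ≤ ξ ^ ξ
        * (1 - 2 * χ - 2 * ζ - ξ) ^ (1 - 2 * χ - 2 * ζ - ξ)
        * (1 - 2 * χ + 4 * ζ - ξ) ^ (1 - 2 * χ + 4 * ζ - ξ)
        * (10 * χ - 7 / 2 - 5 * ζ + ξ) ^ (10 * χ - 7 / 2 - 5 * ζ + ξ) := by
      have c1 := rpow_self_ge h5
      have c2 := rpow_self_ge g1a
      have c3 := rpow_self_ge g2a
      have c4 := rpow_self_ge g3a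
      have hen : (0:ℝ) ≤ Real.exp (-1) := (Real.exp_pos _).le
      calc Real.exp (-1) ^ 4 = Real.exp (-1) * Real.exp (-1) * Real.exp (-1) * Real.exp (-1) := by
            ring
        _ ≤ _ := by gcongr <;> assumption
    have hf_le : ffun χ ζ ≤ Real.exp 16 ^ 5 / (Real.exp (-1) ^ 4 * 1) := by
      apply div_le_div₀ (by positivity) fnum_le (by positivity) fden_ge
    have hg_le : gfun χ ζ ξ ≤ (Real.exp 16 * 1) / Real.exp (-1) ^ 4 := by
      apply div_le_div₀ (by positivity) gnum_le (by positivity) gden_ge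
    calc hfun χ ζ ξ = ffun χ ζ * gfun χ ζ ξ := by rw [hfun]
      _ ≤ (Real.exp 16 ^ 5 / (Real.exp (-1) ^ 4 * 1)) * ((Real.exp 16 * 1) / Real.exp (-1) ^ 4) := by
          apply mul_le_mul hf_le hg_le hg_nonneg (by positivity)
      _ = Real.exp 104 := by
          simp only [← Real.exp_nat_mul, mul_one]
          rw [div_mul_div_comm, ← Real.exp_add, ← Real.exp_add, ← Real.exp_sub]
          norm_num
      _ ≤ Real.exp 110 := Real.exp_le_exp.mpr (by norm_num)

lemma term_le (u s i j : ℕ) (hm : 0 < 2*u+s+5*i) (hD : 4*u ≤ 3*s) (hj : j ≤ 2*u) :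
    ((4*u+2*s+10*i).choose (2*u+s+4*i) : ℝ) *
      (((2*u+s+4*i).factorial : ℝ) * (3:ℝ)^(2*u) /
        (((s+4*i).factorial : ℝ) * (2:ℝ)^u * ((u).factorial : ℝ))) *
      (((2*u+s+6*i).factorial : ℝ) * (3:ℝ)^(2*u+6*i) /
        ((s.factorial : ℝ) * (2:ℝ)^(u+3*i) * ((u+3*i).factorial : ℝ))) *
      ((2*u).choose j : ℝ) * ((2*u+6*i).choose j : ℝ) *
      (2:ℝ)^(2*j) * (j.factorial : ℝ) * ((1:ℝ)/1.618)^j *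
      (((3*s).factorial : ℝ) * ((3*(s+4*i)).factorial : ℝ) / (((3*s-4*u+j)).factorial : ℝ))
    ≤ 729 * Real.exp 6 * ((4*u+2*s+10*i : ℕ) : ℝ)^3 *
        hfun (((u+s+4*i : ℕ) : ℝ) / ((4*u+2*s+10*i : ℕ) : ℝ))
          (((i : ℕ) : ℝ) / ((4*u+2*s+10*i : ℕ) : ℝ))
          (((j : ℕ) : ℝ) / ((4*u+2*s+10*i : ℕ) : ℝ)) ^ (4*u+2*s+10*i) *
        ((Nat.doubleFactorial (3*(4*u+2*s+10*i) - 1)) : ℝ) := by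
  set H : ℝ := hfun (((u+s+4*i : ℕ) : ℝ) / ((4*u+2*s+10*i : ℕ) : ℝ))
      (((i : ℕ) : ℝ) / ((4*u+2*s+10*i : ℕ) : ℝ))
      (((j : ℕ) : ℝ) / ((4*u+2*s+10*i : ℕ) : ℝ)) ^ (4*u+2*s+10*i) with hHdef
  have hcore := core u s i j hm hD hj
  -- positivity of H
  have hstprod : (0:ℝ) < st (s+4*i) * st u * st s * st (u+3*i) * st j * st (2*u-j)
      * st (2*u+6*i-j) * st (3*s-4*u+j) * st (6*(2*u+s+5*i)) := by
    have a1 := st_pos (s+4*i); have a2 := st_pos u; have a3 := st_pos s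
    have a4 := st_pos (u+3*i); have a5 := st_pos j; have a6 := st_pos (2*u-j)
    have a7 := st_pos (2*u+6*i-j); have a8 := st_pos (3*s-4*u+j)
    have a9 := st_pos (6*(2*u+s+5*i))
    positivity
  have hLpos : (0:ℝ) < st (2*(2*u+s+5*i)) * st (2*u) * st (2*u+6*i) * st (3*s)
      * st (3*(s+4*i)) * st (3*(2*u+s+5*i))
      * (3:ℝ)^(4*u+6*i) * (2:ℝ)^(2*j+4*u+3*s+12*i) * ((1:ℝ)/1.618)^j := by
    have a1 := st_pos (2*(2*u+s+5*i)); have a2 := st_pos (2*u); have a3 := st_pos (2*u+6*i)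
    have a4 := st_pos (3*s); have a5 := st_pos (3*(s+4*i)); have a6 := st_pos (3*(2*u+s+5*i))
    positivity
  have hH : 0 < H := by
    by_contra hcon
    push_neg at hcon
    have : H * (st (s+4*i) * st u * st s * st (u+3*i) * st j * st (2*u-j) * st (2*u+6*i-j)
        * st (3*s-4*u+j) * st (6*(2*u+s+5*i))) ≤ 0 :=
      mul_nonpos_of_nonpos_of_nonneg hcon hstprod.le
    rw [← hcore] at this
    linarith
  -- double factorial
  have hdf : (((6*(2*u+s+5*i)).factorial) : ℝ)
      = ((Nat.doubleFactorial (3*(4*u+2*s+10*i) - 1)) : ℝ)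
        * ((2:ℝ)^(3*(2*u+s+5*i)) * (((3*(2*u+s+5*i)).factorial) : ℝ)) := by
    have h2 := Nat.factorial_eq_mul_doubleFactorial (3*(4*u+2*s+10*i) - 1)
    rw [show 3*(4*u+2*s+10*i) - 1 + 1 = 2*(3*(2*u+s+5*i)) by omega,
      Nat.doubleFactorial_two_mul] at h2
    rw [show 6*(2*u+s+5*i) = 2*(3*(2*u+s+5*i)) by ring, h2]
    push_cast
    ring
  -- the K bound
  set K : ℝ := Real.exp 1 * Real.sqrt ((6*(2*u+s+5*i) : ℕ) + 1) with hKdef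
  have hKnn : 0 ≤ K := by positivity
  have hsq : ∀ k : ℕ, k ≤ 6*(2*u+s+5*i) → Real.exp 1 * Real.sqrt ((k:ℝ) + 1) ≤ K := by
    intro k hk
    rw [hKdef]
    apply mul_le_mul_of_nonneg_left _ (Real.exp_pos 1).le
    apply Real.sqrt_le_sqrt
    have : (k:ℝ) ≤ ((6*(2*u+s+5*i) : ℕ) : ℝ) := by exact_mod_cast hk
    linarith
  have hcore' : st (2*(2*u+s+5*i)) * st (2*u) * st (2*u+6*i) * st (3*s) * st (3*(s+4*i))
      * st (3*(2*u+s+5*i))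
      * ((3:ℝ)^(4*u+6*i) * (2:ℝ)^(2*j+4*u+3*s+12*i) * ((1:ℝ)/1.618)^j)
      = H * (st (s+4*i) * st u * st s * st (u+3*i) * st j * st (2*u-j) * st (2*u+6*i-j)
          * st (3*s-4*u+j) * st (6*(2*u+s+5*i))) := by
    rw [← hcore]; ring
  have hpw : (0:ℝ) ≤ (3:ℝ)^(4*u+6*i) * (2:ℝ)^(2*j+4*u+3*s+12*i) * ((1:ℝ)/1.618)^j := by
    positivity
  have hmaster := master K hKnn (2*(2*u+s+5*i)) (2*u) (2*u+6*i) (3*s) (3*(s+4*i))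
    (3*(2*u+s+5*i)) (s+4*i) u s (u+3*i) j (2*u-j) (2*u+6*i-j) (3*s-4*u+j) (6*(2*u+s+5*i))
    ((3:ℝ)^(4*u+6*i) * (2:ℝ)^(2*j+4*u+3*s+12*i) * ((1:ℝ)/1.618)^j) H hpw hH.le
    (hsq _ (by omega)) (hsq _ (by omega)) (hsq _ (by omega)) (hsq _ (by omega))
    (hsq _ (by omega)) (hsq _ (by omega)) hcore'
  -- bound K^6
  have hK6 : K ^ 6 ≤ 729 * Real.exp 6 * ((4*u+2*s+10*i : ℕ) : ℝ)^3 := by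
    rw [hKdef, mul_pow]
    have he : Real.exp 1 ^ 6 = Real.exp 6 := by
      rw [← Real.exp_nat_mul]; norm_num
    have hs6 : Real.sqrt ((6*(2*u+s+5*i) : ℕ) + 1) ^ 6
        = (((6*(2*u+s+5*i) : ℕ) : ℝ) + 1) ^ 3 := by
      rw [show (6:ℕ) = 2*3 from rfl, pow_mul, Real.sq_sqrt (by positivity)]
    rw [he, hs6]
    have hb : (((6*(2*u+s+5*i) : ℕ) : ℝ) + 1) ^ 3 ≤ 729 * ((4*u+2*s+10*i : ℕ) : ℝ)^3 := by
      have h1 : (((6*(2*u+s+5*i) : ℕ) : ℝ) + 1) ≤ 9 * ((4*u+2*s+10*i : ℕ) : ℝ) := by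
        push_cast
        have : (1:ℝ) ≤ 2*(u:ℝ)+(s:ℝ)+5*(i:ℝ) := by exact_mod_cast hm
        nlinarith
      calc (((6*(2*u+s+5*i) : ℕ) : ℝ) + 1) ^ 3 ≤ (9 * ((4*u+2*s+10*i : ℕ) : ℝ)) ^ 3 := by
            apply pow_le_pow_left₀ (by positivity) h1
        _ = 729 * ((4*u+2*s+10*i : ℕ) : ℝ)^3 := by ring
    calc Real.exp 6 * (((6*(2*u+s+5*i) : ℕ) : ℝ) + 1) ^ 3
        ≤ Real.exp 6 * (729 * ((4*u+2*s+10*i : ℕ) : ℝ)^3) :=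
          mul_le_mul_of_nonneg_left hb (Real.exp_pos 6).le
      _ = 729 * Real.exp 6 * ((4*u+2*s+10*i : ℕ) : ℝ)^3 := by ring
  -- cast nonzero facts
  have fne : ∀ k : ℕ, ((k.factorial : ℕ) : ℝ) ≠ 0 := fun k => by
    exact_mod_cast (Nat.factorial_pos k).ne'
  have hch1 : ((4*u+2*s+10*i).choose (2*u+s+4*i) : ℝ)
      = ((4*u+2*s+10*i).factorial : ℝ)
        / (((2*u+s+4*i).factorial : ℝ) * ((2*u+s+6*i).factorial : ℝ)) := by
    rw [Nat.cast_choose ℝ (by omega : 2*u+s+4*i ≤ 4*u+2*s+10*i),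
      show 4*u+2*s+10*i - (2*u+s+4*i) = 2*u+s+6*i by omega]
  have hch2 : ((2*u).choose j : ℝ)
      = ((2*u).factorial : ℝ) / ((j.factorial : ℝ) * (((2*u-j).factorial) : ℝ)) := by
    rw [Nat.cast_choose ℝ hj]
  have hch3 : ((2*u+6*i).choose j : ℝ)
      = ((2*u+6*i).factorial : ℝ)
        / ((j.factorial : ℝ) * (((2*u+6*i-j).factorial) : ℝ)) := by
    rw [Nat.cast_choose ℝ (by omega : j ≤ 2*u+6*i)]
  set NUM : ℝ := ((4*u+2*s+10*i).factorial : ℝ) * ((2*u).factorial : ℝ)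
      * ((2*u+6*i).factorial : ℝ) * ((3*s).factorial : ℝ) * ((3*(s+4*i)).factorial : ℝ)
      * (3:ℝ)^(2*u) * (3:ℝ)^(2*u+6*i) * (2:ℝ)^(2*j) * ((1:ℝ)/1.618)^j with hNUM
  set DEN : ℝ := ((s+4*i).factorial : ℝ) * (2:ℝ)^u * (u.factorial : ℝ)
      * (s.factorial : ℝ) * (2:ℝ)^(u+3*i) * ((u+3*i).factorial : ℝ)
      * (j.factorial : ℝ) * ((2*u-j).factorial : ℝ) * ((2*u+6*i-j).factorial : ℝ)
      * ((3*s-4*u+j).factorial : ℝ) with hDEN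
  have hDENpos : 0 < DEN := by
    rw [hDEN]
    have := Nat.factorial_pos (s+4*i)
    positivity
  have hDEN2pos : (0:ℝ) < (2:ℝ)^(3*(2*u+s+5*i)) * ((3*(2*u+s+5*i)).factorial : ℝ) := by
    positivity
  have hL : ((4*u+2*s+10*i).choose (2*u+s+4*i) : ℝ) *
      (((2*u+s+4*i).factorial : ℝ) * (3:ℝ)^(2*u) /
        (((s+4*i).factorial : ℝ) * (2:ℝ)^u * ((u).factorial : ℝ))) *
      (((2*u+s+6*i).factorial : ℝ) * (3:ℝ)^(2*u+6*i) /
        ((s.factorial : ℝ) * (2:ℝ)^(u+3*i) * ((u+3*i).factorial : ℝ))) *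
      ((2*u).choose j : ℝ) * ((2*u+6*i).choose j : ℝ) *
      (2:ℝ)^(2*j) * (j.factorial : ℝ) * ((1:ℝ)/1.618)^j *
      (((3*s).factorial : ℝ) * ((3*(s+4*i)).factorial : ℝ) / (((3*s-4*u+j)).factorial : ℝ))
      = NUM / DEN := by
    rw [hch1, hch2, hch3, hNUM, hDEN]
    field_simp
  have hR : 729 * Real.exp 6 * ((4*u+2*s+10*i : ℕ) : ℝ)^3 * H
        * ((Nat.doubleFactorial (3*(4*u+2*s+10*i) - 1)) : ℝ)
      = (729 * Real.exp 6 * ((4*u+2*s+10*i : ℕ) : ℝ)^3 * H * ((6*(2*u+s+5*i)).factorial : ℝ))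
        / ((2:ℝ)^(3*(2*u+s+5*i)) * ((3*(2*u+s+5*i)).factorial : ℝ)) := by
    rw [eq_div_iff hDEN2pos.ne']
    rw [hdf]
    ring
  rw [hL, hR, div_le_div_iff₀ hDENpos hDEN2pos]
  have hRfacts : (0:ℝ) ≤ ((s+4*i).factorial : ℝ) * ((u).factorial : ℝ) * ((s).factorial : ℝ)
      * ((u+3*i).factorial : ℝ) * ((j).factorial : ℝ) * ((2*u-j).factorial : ℝ)
      * ((2*u+6*i-j).factorial : ℝ) * ((3*s-4*u+j).factorial : ℝ)
      * ((6*(2*u+s+5*i)).factorial : ℝ) := by positivity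
  calc NUM * ((2:ℝ)^(3*(2*u+s+5*i)) * ((3*(2*u+s+5*i)).factorial : ℝ))
      = (((2*(2*u+s+5*i)).factorial : ℝ) * ((2*u).factorial : ℝ) * ((2*u+6*i).factorial : ℝ)
          * ((3*s).factorial : ℝ) * ((3*(s+4*i)).factorial : ℝ)
          * ((3*(2*u+s+5*i)).factorial : ℝ)
          * ((3:ℝ)^(4*u+6*i) * (2:ℝ)^(2*j+4*u+3*s+12*i) * ((1:ℝ)/1.618)^j))
        * (2:ℝ)^(2*u+3*i) := by
        rw [hNUM, show 2*(2*u+s+5*i) = 4*u+2*s+10*i by ring]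
        ring
    _ ≤ (K ^ 6 * H * (((s+4*i).factorial : ℝ) * ((u).factorial : ℝ) * ((s).factorial : ℝ)
          * ((u+3*i).factorial : ℝ) * ((j).factorial : ℝ) * ((2*u-j).factorial : ℝ)
          * ((2*u+6*i-j).factorial : ℝ) * ((3*s-4*u+j).factorial : ℝ)
          * ((6*(2*u+s+5*i)).factorial : ℝ))) * (2:ℝ)^(2*u+3*i) :=
        mul_le_mul_of_nonneg_right hmaster (by positivity)
    _ ≤ ((729 * Real.exp 6 * ((4*u+2*s+10*i : ℕ) : ℝ)^3) * H
          * (((s+4*i).factorial : ℝ) * ((u).factorial : ℝ) * ((s).factorial : ℝ)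
          * ((u+3*i).factorial : ℝ) * ((j).factorial : ℝ) * ((2*u-j).factorial : ℝ)
          * ((2*u+6*i-j).factorial : ℝ) * ((3*s-4*u+j).factorial : ℝ)
          * ((6*(2*u+s+5*i)).factorial : ℝ))) * (2:ℝ)^(2*u+3*i) := by
        have h1 : K ^ 6 * H ≤ (729 * Real.exp 6 * ((4*u+2*s+10*i : ℕ) : ℝ)^3) * H :=
          mul_le_mul_of_nonneg_right hK6 hH.le
        have h2 := mul_le_mul_of_nonneg_right h1 hRfacts
        exact mul_le_mul_of_nonneg_right h2 (by positivity)
    _ = 729 * Real.exp 6 * ((4*u+2*s+10*i : ℕ) : ℝ)^3 * H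
          * ((6*(2*u+s+5*i)).factorial : ℝ) * DEN := by
        rw [hDEN]
        ring

lemma Msup_bddAbove : BddAbove {y : ℝ | ∃ p ∈ Omega, hfun p.1 p.2.1 p.2.2 = y} := by
  refine ⟨Real.exp 110, ?_⟩
  rintro y ⟨p, hp, rfl⟩
  obtain ⟨h1, h2, h3, h4, h5, h6⟩ := hp
  exact (hfun_bounds h1 h2 h3 h4 h5 h6).2

lemma Msup_nonneg : 0 ≤ Msup := by
  have hmem : ((0.4545 : ℝ), (0 : ℝ), (0 : ℝ)) ∈ Omega := by
    constructor <;> norm_num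
  have h0 : 0 ≤ hfun 0.4545 0 0 :=
    (hfun_bounds (by norm_num) (by norm_num) (by norm_num) (by norm_num) (by norm_num)
      (by norm_num)).1
  have hle : hfun 0.4545 0 0 ≤ Msup :=
    le_csSup Msup_bddAbove ⟨((0.4545 : ℝ), (0 : ℝ), (0 : ℝ)), hmem, rfl⟩
  linarith

/-- there is a constant `C > 0` such that for every positive even `n` and every
integer `x` with `0.454·n < x ≤ 0.45537·n`, `q(x,n)/(3n−1)!! ≤ C·n⁶·Mⁿ`. -/
theorem q_div_doubleFactorial_le :
    ∃ C : ℝ, 0 < C ∧ ∀ n x : ℕ, Even n → 0 < n →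
      0.454 * (n : ℝ) < (x : ℝ) → (x : ℝ) ≤ 0.45537 * (n : ℝ) →
        qfun x n / (Nat.doubleFactorial (3 * n - 1) : ℝ)
          ≤ C * (n : ℝ) ^ 6 * Msup ^ n := by
  refine ⟨2916 * Real.exp 6, by positivity, ?_⟩
  intro n x hEven hn hx1 hx2
  obtain ⟨m, hm⟩ := hEven
  have hnm : n = 2 * m := by omega
  subst hnm
  have hm0 : 0 < m := by omega
  have hnR : (0:ℝ) < ((2*m : ℕ) : ℝ) := by positivity
  -- integer versions of the range hypotheses
  have h454 : 454 * (2*m) < 1000 * x := by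
    have : (454 : ℝ) * ((2*m : ℕ) : ℝ) < 1000 * (x:ℝ) := by
      push_cast at hx1 ⊢
      nlinarith
    exact_mod_cast this
  have h45537 : 100000 * x ≤ 45537 * (2*m) := by
    have : (100000 : ℝ) * (x:ℝ) ≤ 45537 * ((2*m : ℕ) : ℝ) := by
      push_cast at hx2 ⊢
      nlinarith
    exact_mod_cast this
  have hdfpos : (0:ℝ) < (Nat.doubleFactorial (3 * (2*m) - 1) : ℝ) := by
    exact_mod_cast Nat.doubleFactorial_pos _
  rw [div_le_iff₀ hdfpos]
  have hn2 : (2*m) / 2 = m := by omega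
  rw [qfun, hn2]
  set B : ℝ := 729 * Real.exp 6 * ((2*m : ℕ) : ℝ)^3 * Msup ^ (2*m)
      * (Nat.doubleFactorial (3 * (2*m) - 1) : ℝ) with hB
  have hBnn : 0 ≤ B := by
    rw [hB]
    have := Msup_nonneg
    positivity
  have inner : ∀ i ∈ Finset.range (m - x + 1), ∀ j ∈ Finset.range (2*m - 2*x - 2*i + 1),
      ((2*m).choose (m - i) : ℝ) *
      (((m - i).factorial : ℝ) * (3 : ℝ) ^ (2*m - 2 * x - 2 * i) /
        (((2 * x + i - m).factorial : ℝ) * (2 : ℝ) ^ (m - x - i) *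
          ((m - x - i).factorial : ℝ))) *
      (((m + i).factorial : ℝ) * (3 : ℝ) ^ (2*m - 2 * x + 4 * i) /
        (((2 * x - 3 * i - m).factorial : ℝ) * (2 : ℝ) ^ (m - x + 2 * i) *
          ((m - x + 2 * i).factorial : ℝ))) *
      ((2*m - 2 * i - 2 * x).choose j : ℝ) * ((2*m - 2 * x + 4 * i).choose j : ℝ) *
      (2 : ℝ) ^ (2 * j) * (j.factorial : ℝ) * (1 / 1.618 : ℝ) ^ j *
      (((3 * (2 * x - m - 3 * i)).factorial : ℝ) *
          ((3 * (2 * x - m + i)).factorial : ℝ) /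
        ((3 * (2 * x - m - 3 * i) - 2 * (2*m - 2 * i - 2 * x) + j).factorial : ℝ)) ≤ B := by
    intro i hi j hj
    rw [Finset.mem_range] at hi hj
    set u := m - x - i with hu
    set s := 2 * x - 3 * i - m with hs
    have hium : i + x ≤ m := by omega
    have hDD : 4 * u ≤ 3 * s := by omega
    have hjj : j ≤ 2 * u := by omega
    have hmm : 0 < 2*u + s + 5*i := by omega
    have e0 : 2*m = 4*u+2*s+10*i := by omega
    have e1 : m - i = 2*u+s+4*i := by omega
    have e2 : 2*m - 2*x - 2*i = 2*u := by omega
    have e3 : 2*x + i - m = s + 4*i := by omega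
    have e5 : m + i = 2*u+s+6*i := by omega
    have e6 : 2*m - 2*x + 4*i = 2*u+6*i := by omega
    have e7 : 2*x - 3*i - m = s := by omega
    have e8 : m - x + 2*i = u + 3*i := by omega
    have e9 : 2*m - 2*i - 2*x = 2*u := by omega
    have e10 : 2*x - m - 3*i = s := by omega
    have e11 : 2*x - m + i = s + 4*i := by omega
    have e12 : 3 * (2*x - m - 3*i) - 2*(2*m - 2*i - 2*x) + j = 3*s - 4*u + j := by omega
    have exx : x = u + s + 4*i := by omega
    rw [e1, e2, e3, e5, e6, e8, e9, e10, e11]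
    rw [show 3*s - 2*(2*u) + j = 3*s - 4*u + j by omega, e0]
    have hterm := term_le u s i j hmm hDD hjj
    -- the hfun point and Msup
    have hchi1 : (0.454 : ℝ) < ((u+s+4*i : ℕ) : ℝ) / ((4*u+2*s+10*i : ℕ) : ℝ) := by
      rw [lt_div_iff₀ (by exact_mod_cast (by omega : 0 < 4*u+2*s+10*i))]
      have : (454 : ℝ) * ((4*u+2*s+10*i : ℕ) : ℝ) < 1000 * ((u+s+4*i : ℕ) : ℝ) := by
        have hc : 454 * (4*u+2*s+10*i) < 1000 * (u+s+4*i) := by omega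
        exact_mod_cast hc
      linarith
    have hchi2 : ((u+s+4*i : ℕ) : ℝ) / ((4*u+2*s+10*i : ℕ) : ℝ) ≤ 0.45537 := by
      rw [div_le_iff₀ (by exact_mod_cast (by omega : 0 < 4*u+2*s+10*i))]
      have : (100000 : ℝ) * ((u+s+4*i : ℕ) : ℝ) ≤ 45537 * ((4*u+2*s+10*i : ℕ) : ℝ) := by
        have hc : 100000 * (u+s+4*i) ≤ 45537 * (4*u+2*s+10*i) := by omega
        exact_mod_cast hc
      linarith
    have hNpos : (0:ℝ) < ((4*u+2*s+10*i : ℕ) : ℝ) := by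
      exact_mod_cast (by omega : 0 < 4*u+2*s+10*i)
    have hzeta1 : (0:ℝ) ≤ ((i : ℕ) : ℝ) / ((4*u+2*s+10*i : ℕ) : ℝ) := by positivity
    have hzeta2 : ((i : ℕ) : ℝ) / ((4*u+2*s+10*i : ℕ) : ℝ)
        ≤ 1/2 - ((u+s+4*i : ℕ) : ℝ) / ((4*u+2*s+10*i : ℕ) : ℝ) := by
      rw [le_sub_iff_add_le, ← add_div, div_le_iff₀ hNpos]
      have hc : (2:ℝ) * (((i:ℕ):ℝ) + ((u+s+4*i : ℕ) : ℝ)) ≤ ((4*u+2*s+10*i : ℕ) : ℝ) := by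
        have : 2 * (i + (u+s+4*i)) ≤ 4*u+2*s+10*i := by omega
        exact_mod_cast this
      linarith
    have hxi1 : (0:ℝ) ≤ ((j : ℕ) : ℝ) / ((4*u+2*s+10*i : ℕ) : ℝ) := by positivity
    have hxi2 : ((j : ℕ) : ℝ) / ((4*u+2*s+10*i : ℕ) : ℝ)
        ≤ 1 - 2 * (((u+s+4*i : ℕ) : ℝ) / ((4*u+2*s+10*i : ℕ) : ℝ))
          - 2 * (((i : ℕ) : ℝ) / ((4*u+2*s+10*i : ℕ) : ℝ)) := by
      rw [show (1 : ℝ) - 2 * (((u+s+4*i : ℕ) : ℝ) / ((4*u+2*s+10*i : ℕ) : ℝ))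
            - 2 * (((i : ℕ) : ℝ) / ((4*u+2*s+10*i : ℕ) : ℝ))
          = 1 - (2*((u+s+4*i : ℕ) : ℝ) + 2*((i : ℕ) : ℝ)) / ((4*u+2*s+10*i : ℕ) : ℝ) by ring,
        le_sub_iff_add_le, ← add_div, div_le_one hNpos]
      have hc : ((j:ℕ):ℝ) + (2*((u+s+4*i : ℕ) : ℝ) + 2*((i:ℕ):ℝ))
          ≤ ((4*u+2*s+10*i : ℕ) : ℝ) := by
        have : j + (2*(u+s+4*i) + 2*i) ≤ 4*u+2*s+10*i := by omega
        exact_mod_cast this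
      linarith
    have hfb := hfun_bounds hchi1 hchi2 hzeta1 hzeta2 hxi1 hxi2
    have hmemS : hfun (((u+s+4*i : ℕ) : ℝ) / ((4*u+2*s+10*i : ℕ) : ℝ))
        (((i : ℕ) : ℝ) / ((4*u+2*s+10*i : ℕ) : ℝ))
        (((j : ℕ) : ℝ) / ((4*u+2*s+10*i : ℕ) : ℝ)) ≤ Msup := by
      apply le_csSup Msup_bddAbove
      exact ⟨(((u+s+4*i : ℕ) : ℝ) / ((4*u+2*s+10*i : ℕ) : ℝ),
        ((i : ℕ) : ℝ) / ((4*u+2*s+10*i : ℕ) : ℝ),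
        ((j : ℕ) : ℝ) / ((4*u+2*s+10*i : ℕ) : ℝ)),
        ⟨hchi1, hchi2, hzeta1, hzeta2, hxi1, hxi2⟩, rfl⟩
    have hpow' : hfun (((u+s+4*i : ℕ) : ℝ) / ((4*u+2*s+10*i : ℕ) : ℝ))
        (((i : ℕ) : ℝ) / ((4*u+2*s+10*i : ℕ) : ℝ))
        (((j : ℕ) : ℝ) / ((4*u+2*s+10*i : ℕ) : ℝ)) ^ (4*u+2*s+10*i)
        ≤ Msup ^ (4*u+2*s+10*i) :=
      pow_le_pow_left₀ hfb.1 hmemS _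
    refine le_trans hterm ?_
    rw [hB, e0]
    have h1 := mul_le_mul_of_nonneg_left hpow'
      (by positivity : (0:ℝ) ≤ 729 * Real.exp 6 * ((4*u+2*s+10*i : ℕ) : ℝ)^3)
    exact mul_le_mul_of_nonneg_right h1 (by positivity)
  calc (∑ i ∈ Finset.range (m - x + 1), ∑ j ∈ Finset.range (2*m - 2*x - 2*i + 1),
      ((2*m).choose (m - i) : ℝ) *
      (((m - i).factorial : ℝ) * (3 : ℝ) ^ (2*m - 2 * x - 2 * i) /
        (((2 * x + i - m).factorial : ℝ) * (2 : ℝ) ^ (m - x - i) *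
          ((m - x - i).factorial : ℝ))) *
      (((m + i).factorial : ℝ) * (3 : ℝ) ^ (2*m - 2 * x + 4 * i) /
        (((2 * x - 3 * i - m).factorial : ℝ) * (2 : ℝ) ^ (m - x + 2 * i) *
          ((m - x + 2 * i).factorial : ℝ))) *
      ((2*m - 2 * i - 2 * x).choose j : ℝ) * ((2*m - 2 * x + 4 * i).choose j : ℝ) *
      (2 : ℝ) ^ (2 * j) * (j.factorial : ℝ) * (1 / 1.618 : ℝ) ^ j *
      (((3 * (2 * x - m - 3 * i)).factorial : ℝ) *
          ((3 * (2 * x - m + i)).factorial : ℝ) /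
        ((3 * (2 * x - m - 3 * i) - 2 * (2*m - 2 * i - 2 * x) + j).factorial : ℝ)))
      ≤ ∑ i ∈ Finset.range (m - x + 1), ∑ _j ∈ Finset.range (2*m - 2*x - 2*i + 1), B := by
        apply Finset.sum_le_sum
        intro i hi
        apply Finset.sum_le_sum
        intro j hj
        exact inner i hi j hj
    _ ≤ ∑ _i ∈ Finset.range (m - x + 1), ((2*m : ℕ) : ℝ) * B := by
        apply Finset.sum_le_sum
        intro i hi
        rw [Finset.sum_const, Finset.card_range, nsmul_eq_mul]
        apply mul_le_mul_of_nonneg_right _ hBnn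
        have : 2*m - 2*x - 2*i + 1 ≤ 2*m := by omega
        exact_mod_cast this
    _ = ((m - x + 1 : ℕ) : ℝ) * (((2*m : ℕ) : ℝ) * B) := by
        rw [Finset.sum_const, Finset.card_range, nsmul_eq_mul]
    _ ≤ ((2*m : ℕ) : ℝ) * (((2*m : ℕ) : ℝ) * B) := by
        apply mul_le_mul_of_nonneg_right _ (by positivity)
        have : m - x + 1 ≤ 2*m := by omega
        exact_mod_cast this
    _ ≤ 2916 * Real.exp 6 * ((2*m : ℕ) : ℝ) ^ 6 * Msup ^ (2*m)
        * (Nat.doubleFactorial (3 * (2*m) - 1) : ℝ) := by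
        rw [hB]
        have h1 : (1:ℝ) ≤ ((2*m : ℕ) : ℝ) := by exact_mod_cast (by omega : 1 ≤ 2*m)
        have hM := Msup_nonneg
        have hP : (0:ℝ) ≤ Real.exp 6 * Msup ^ (2*m)
            * (Nat.doubleFactorial (3 * (2*m) - 1) : ℝ) := by
          have := pow_nonneg hM (2*m)
          positivity
        have haux : ((2*m : ℕ) : ℝ) * (((2*m : ℕ) : ℝ) * (729 * Real.exp 6 * ((2*m : ℕ) : ℝ)^3
              * Msup ^ (2*m) * (Nat.doubleFactorial (3 * (2*m) - 1) : ℝ)))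
            = 729 * ((2*m : ℕ) : ℝ)^5 * (Real.exp 6 * Msup ^ (2*m)
              * (Nat.doubleFactorial (3 * (2*m) - 1) : ℝ)) := by ring
        have haux2 : 2916 * Real.exp 6 * ((2*m : ℕ) : ℝ) ^ 6 * Msup ^ (2*m)
              * (Nat.doubleFactorial (3 * (2*m) - 1) : ℝ)
            = 2916 * ((2*m : ℕ) : ℝ)^6 * (Real.exp 6 * Msup ^ (2*m)
              * (Nat.doubleFactorial (3 * (2*m) - 1) : ℝ)) := by ring
        rw [haux, haux2]
        apply mul_le_mul_of_nonneg_right _ hP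
        have h5 : ((2*m : ℕ) : ℝ)^5 ≤ ((2*m : ℕ) : ℝ)^6 :=
          pow_le_pow_right₀ h1 (by norm_num)
        nlinarith [pow_nonneg (le_trans zero_le_one h1) 6]
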